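/- Truth lemma for the canonical structure: for every formula ψ ∈ L4(Γ) and every L4-realizable set Φ, (M^c, ω_Φ) ⊨ ψ if and only if ψ ∈ Φ. -/
import Mathlib


open MeasureTheory

namespace IA

set_option linter.unusedVariables false

variable {n : ℕ}

/-! ### Finite normal-form games -/

/-- `Oth S i`: profiles of strategies of the players other than `i` (the set `Σ_{-i}`). -/
def Oth (S : Fin n → Type) (i : Fin n) : Type := ∀ j : {j : Fin n // j ≠ i}, S j.1

instance (S : Fin n → Type) [∀ j, Fintype (S j)] (i : Fin n) : Fintype (Oth S i) := by
  unfold Oth; infer_instance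

instance (S : Fin n → Type) [∀ j, Nonempty (S j)] (i : Fin n) : Nonempty (Oth S i) := by
  unfold Oth; infer_instance

variable {S : Fin n → Type}

/-- Glue a strategy for player `i` with a profile for the other players. -/
def ext (i : Fin n) (σ : S i) (τ : Oth S i) : ∀ j, S j :=
  fun j => if h : j = i then cast (congrArg S h).symm σ else τ ⟨j, h⟩

section
variable [∀ j, Fintype (S j)]

/-- Expected utility of the pure strategy `σ` of player `i` against the belief `μ` on `Σ_{-i}`. -/
noncomputable def EU (u : ∀ i : Fin n, (∀ j, S j) → ℝ) (i : Fin n) (σ : S i)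
    (μ : Oth S i → ℝ) : ℝ :=
  ∑ τ : Oth S i, μ τ * u i (ext i σ τ)

/-- `μ` is a probability distribution on `Σ_{-i}` (a belief of player `i`). -/
def IsBelief {i : Fin n} (μ : Oth S i → ℝ) : Prop :=
  (∀ τ, 0 ≤ μ τ) ∧ ∑ τ, μ τ = 1

/-- `σ` is a best response (maximizes expected utility over `Σ_i`) to belief `μ`. -/
def BestResponse (u : ∀ i : Fin n, (∀ j, S j) → ℝ) (i : Fin n) (σ : S i)
    (μ : Oth S i → ℝ) : Prop :=
  ∀ σ' : S i, EU u i σ' μ ≤ EU u i σ μ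

end

/-- The product `Π_{j' ≠ j} X_{j'}` of sets of strategies, viewed inside `Σ_{-j}`. -/
def OthSet (X : ∀ j : Fin n, Set (S j)) (j : Fin n) : Set (Oth S j) :=
  {τ | ∀ j', τ j' ∈ X j'.1}

/-! ### Probability structures appropriate for a game -/

/-- A probability structure appropriate for the game with strategy sets `S`. -/
structure PStruct (n : ℕ) (S : Fin n → Type) where
  Ω : Type
  F : MeasurableSpace Ω
  s : Ω → ∀ j, S j
  PR : Fin n → Ω → @Measure Ω F
  PR_prob : ∀ i ω, IsProbabilityMeasure (PR i ω)
  meas_play : ∀ (i : Fin n) (σ : S i), MeasurableSet[F] {ω | s ω i = σ}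
  knows_play : ∀ i ω, PR i ω {ω' | s ω' i = s ω i} = 1
  meas_PR : ∀ (i : Fin n) (π : @Measure Ω F), MeasurableSet[F] {ω | PR i ω = π}
  knows_PR : ∀ i ω, PR i ω {ω' | PR i ω' = PR i ω} = 1

section
variable [∀ j, Fintype (S j)]

/-- The belief of player `i` at state `ω` about the strategies of the other players,
i.e. the marginal of `PR_i(ω)` on `Σ_{-i}` via `s_{-i}`. -/
noncomputable def margBelief (M : PStruct n S) (i : Fin n) (ω : M.Ω) (τ : Oth S i) : ℝ :=
  (M.PR i ω {ω' | ∀ j : {j : Fin n // j ≠ i}, M.s ω' j.1 = τ j}).toReal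

/-- `RAT_i` holds at `ω`: player `i`'s strategy at `ω` is a best response to the belief
induced by `PR_i(ω)`. -/
def SatRAT (u : ∀ i : Fin n, (∀ j, S j) → ℝ) (M : PStruct n S) (i : Fin n) (ω : M.Ω) : Prop :=
  BestResponse u i (M.s ω i) (margBelief M i ω)

end

/-! ### The language L4 (countable conjunctions and `pr_i(φ) > α` for real `α ∈ [0,1]`) -/

inductive L4 (n : ℕ) (S : Fin n → Type) : Type where
  | tt : L4 n S
  | RAT (i : Fin n) : L4 n S
  | play (i : Fin n) (σ : S i) : L4 n S
  | neg (φ : L4 n S) : L4 n S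
  | and (φ ψ : L4 n S) : L4 n S
  | B (i : Fin n) (φ : L4 n S) : L4 n S
  | Bpos (i : Fin n) (φ : L4 n S) : L4 n S
  | diam (φ : L4 n S) : L4 n S
  | conj (f : ℕ → L4 n S) : L4 n S
  | prGt (i : Fin n) (α : Set.Icc (0:ℝ) 1) (φ : L4 n S) : L4 n S

def Sat4 [∀ j, Fintype (S j)] (u : ∀ i : Fin n, (∀ j, S j) → ℝ) :
    L4 n S → (M : PStruct n S) → M.Ω → Prop
  | .tt, _, _ => True
  | .RAT i, M, ω => SatRAT u M i ω
  | .play i σ, M, ω => M.s ω i = σ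
  | .neg φ, M, ω => ¬ Sat4 u φ M ω
  | .and φ ψ, M, ω => Sat4 u φ M ω ∧ Sat4 u ψ M ω
  | .B i φ, M, ω => ∃ A, MeasurableSet[M.F] A ∧ A ⊆ {ω' | Sat4 u φ M ω'} ∧ M.PR i ω A = 1
  | .Bpos i φ, M, ω => ∃ A, MeasurableSet[M.F] A ∧ A ⊆ {ω' | Sat4 u φ M ω'} ∧ 0 < M.PR i ω A
  | .diam φ, _, _ => ∃ (M' : PStruct n S) (ω' : M'.Ω), Sat4 u φ M' ω'
  | .conj f, M, ω => ∀ m, Sat4 u (f m) M ω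
  | .prGt i α φ, M, ω => (α : ℝ) < (M.PR i ω {ω' | Sat4 u φ M ω'}).toReal

def conjList4 : List (L4 n S) → L4 n S
  | [] => .tt
  | φ :: l => .and φ (conjList4 l)

noncomputable def conjFin4 {α : Type} [Fintype α] (f : α → L4 n S) : L4 n S :=
  conjList4 (Finset.univ.toList.map f)

/-- material implication `φ ⇒ ψ` -/
def impF4 (φ ψ : L4 n S) : L4 n S := .neg (.and φ (.neg ψ))

/-! ### The canonical structure -/

section
variable [∀ j, Fintype (S j)]

/-- `Ψ ⊆ L4(Γ)` is L4-realizable. -/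
def L4Real (u : ∀ i : Fin n, (∀ j, S j) → ℝ) (Ψ : Set (L4 n S)) : Prop :=
  ∃ (M : PStruct n S) (ω : M.Ω), ∀ φ : L4 n S, Sat4 u φ M ω ↔ φ ∈ Ψ

/-- The states of the canonical structure: the L4-realizable sets of formulas. -/
def Ωc (u : ∀ i : Fin n, (∀ j, S j) → ℝ) : Type := {Φ : Set (L4 n S) // L4Real u Φ}

/-- `F_φ = {ω_Φ : φ ∈ Φ}`. -/
def Fset (u : ∀ i : Fin n, (∀ j, S j) → ℝ) (φ : L4 n S) : Set (Ωc u) := {Φ | φ ∈ Φ.1}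

/-- `play(σ⃗) := ∧_j play_j(σ_j)`. -/
noncomputable def playAll (p : ∀ j, S j) : L4 n S := conjFin4 fun j => L4.play j (p j)

/-- `s^c(ω_Φ)`: the strategy profile `σ⃗` with `play(σ⃗) ∈ Φ`. -/
noncomputable def scanon (u : ∀ i : Fin n, (∀ j, S j) → ℝ) [∀ j, Nonempty (S j)]
    (Φ : Ωc u) : ∀ j, S j :=
  Classical.epsilon fun p => playAll p ∈ Φ.1

/-- The value that `PR^c_i(ω_Φ)` must take on `F_φ`: the paper writes
`inf {α : (pr_i(φ) > α) ∈ Φ}`, which (as the set of such `α` is `[0, p)` where `p` is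
the probability of `φ` in `Φ`) we read as the supremum of the `α ∈ [0,1]` with
`(pr_i(φ) > α) ∈ Φ`. -/
noncomputable def canonVal (u : ∀ i : Fin n, (∀ j, S j) → ℝ) (i : Fin n) (Φ : Ωc u)
    (φ : L4 n S) : ENNReal :=
  ENNReal.ofReal (sSup {α : ℝ | ∃ h : α ∈ Set.Icc (0:ℝ) 1, L4.prGt i ⟨α, h⟩ φ ∈ Φ.1})

end

/-! ### Auxiliary lemmas for the truth lemma -/

section Aux
variable [∀ j, Fintype (S j)] (u : ∀ i : Fin n, (∀ j, S j) → ℝ)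

lemma sat_conjList (l : List (L4 n S)) (M : PStruct n S) (ω : M.Ω) :
    Sat4 u (conjList4 l) M ω ↔ ∀ φ ∈ l, Sat4 u φ M ω := by
  induction l with
  | nil => simp [conjList4, Sat4]
  | cons φ l ih => simp [conjList4, Sat4, ih]

lemma sat_conjFin {α : Type} [Fintype α] (f : α → L4 n S) (M : PStruct n S) (ω : M.Ω) :
    Sat4 u (conjFin4 f) M ω ↔ ∀ a, Sat4 u (f a) M ω := by
  rw [conjFin4, sat_conjList]
  simp

lemma sat_playAll (p : ∀ j, S j) (M : PStruct n S) (ω : M.Ω) :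
    Sat4 u (playAll p) M ω ↔ M.s ω = p := by
  rw [playAll, sat_conjFin]
  simp only [Sat4]
  exact ⟨fun h => funext h, fun h j => by rw [h]⟩

lemma theory_real (M : PStruct n S) (ω : M.Ω) : L4Real u {φ | Sat4 u φ M ω} :=
  ⟨M, ω, fun _ => Iff.rfl⟩

lemma scanon_eq [∀ j, Nonempty (S j)] (Φ : Ωc u) (M : PStruct n S) (ω : M.Ω)
    (h : ∀ φ : L4 n S, Sat4 u φ M ω ↔ φ ∈ Φ.1) : scanon u Φ = M.s ω := by
  have hex : ∃ p, playAll p ∈ Φ.1 := ⟨M.s ω, (h _).1 ((sat_playAll u _ M ω).2 rfl)⟩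
  have hspec : playAll (scanon u Φ) ∈ Φ.1 := Classical.epsilon_spec hex
  exact ((sat_playAll u _ M ω).1 ((h _).2 hspec)).symm

lemma canonVal_eq (i : Fin n) (Φ : Ωc u) (M : PStruct n S) (ω : M.Ω)
    (h : ∀ φ : L4 n S, Sat4 u φ M ω ↔ φ ∈ Φ.1) (φ : L4 n S) :
    canonVal u i Φ φ = M.PR i ω {ω' | Sat4 u φ M ω'} := by
  have hprob := M.PR_prob i ω
  have hfin : M.PR i ω {ω' | Sat4 u φ M ω'} ≠ ⊤ := measure_ne_top _ _
  set p : ℝ := (M.PR i ω {ω' | Sat4 u φ M ω'}).toReal with hp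
  have hp0 : 0 ≤ p := ENNReal.toReal_nonneg
  have hp1 : p ≤ 1 := by
    have := prob_le_one (μ := M.PR i ω) (s := {ω' | Sat4 u φ M ω'})
    rw [hp]
    exact ENNReal.toReal_le_of_le_ofReal one_pos.le (by simpa using this)
  have hset : {α : ℝ | ∃ hh : α ∈ Set.Icc (0:ℝ) 1, L4.prGt i ⟨α, hh⟩ φ ∈ Φ.1}
      = Set.Ico 0 p := by
    ext α
    simp only [Set.mem_setOf_eq, Set.mem_Ico]
    constructor
    · rintro ⟨hα, hm⟩
      have hsat : Sat4 u (L4.prGt i ⟨α, hα⟩ φ) M ω := (h _).2 hm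
      exact ⟨hα.1, hsat⟩
    · rintro ⟨h0, hlt⟩
      have hα : α ∈ Set.Icc (0:ℝ) 1 := ⟨h0, le_trans hlt.le hp1⟩
      exact ⟨hα, (h _).1 hlt⟩
  rw [canonVal, hset]
  rcases eq_or_lt_of_le hp0 with h0 | h0
  · rw [← h0]
    have : (M.PR i ω {ω' | Sat4 u φ M ω'}) = 0 := by
      have hz : (M.PR i ω {ω' | Sat4 u φ M ω'}).toReal = 0 := by rw [← hp, ← h0]
      rcases (ENNReal.toReal_eq_zero_iff _).1 hz with h' | h'
      · exact h'
      · exact absurd h' hfin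
    rw [this]
    simp
  · rw [csSup_Ico h0]
    exact ENNReal.ofReal_toReal hfin

lemma Fset_mem_iff (Φ : Ωc u) (M : PStruct n S) (ω : M.Ω)
    (h : ∀ φ : L4 n S, Sat4 u φ M ω ↔ φ ∈ Φ.1) (φ : L4 n S) :
    Φ ∈ Fset u φ ↔ Sat4 u φ M ω := (h φ).symm

lemma Fset_neg (χ : L4 n S) : Fset u (.neg χ) = (Fset u χ)ᶜ := by
  ext Φ
  obtain ⟨M, ω, h⟩ := Φ.2
  simp only [Fset, Set.mem_setOf_eq, Set.mem_compl_iff]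
  rw [← h, ← h]
  exact Iff.rfl

lemma Fset_subset_sat {χ φ : L4 n S} (hsub : Fset u χ ⊆ Fset u φ)
    (M : PStruct n S) (ω' : M.Ω) (hχ : Sat4 u χ M ω') : Sat4 u φ M ω' := by
  have hmem : (⟨{ψ | Sat4 u ψ M ω'}, theory_real u M ω'⟩ : Ωc u) ∈ Fset u χ := hχ
  exact hsub hmem

/-- The formula `∧_{j ≠ i} play_j(τ_j)`. -/
noncomputable def othPlay (i : Fin n) (τ : Oth S i) : L4 n S :=
  conjFin4 fun j : {j : Fin n // j ≠ i} => L4.play j.1 (τ j)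

lemma sat_othPlay (i : Fin n) (τ : Oth S i) (M : PStruct n S) (ω : M.Ω) :
    Sat4 u (othPlay i τ) M ω ↔ ∀ j : {j : Fin n // j ≠ i}, M.s ω j.1 = τ j := by
  rw [othPlay, sat_conjFin]
  exact Iff.rfl

end Aux

/-- Truth lemma for the canonical structure: in the canonical structure,
a formula is true at the state `ω_Φ` iff it belongs to `Φ`. -/
theorem canonical_truth_lemma
    {S : Fin n → Type} [∀ j, Fintype (S j)] [∀ j, Nonempty (S j)]
    (u : ∀ i : Fin n, (∀ j, S j) → ℝ)
    (Fc : MeasurableSpace (Ωc u))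
    (hFc : ∀ A : Set (Ωc u), MeasurableSet[Fc] A ↔ ∃ φ : L4 n S, A = Fset u φ)
    (PR : Fin n → Ωc u → @Measure (Ωc u) Fc)
    (hPR : ∀ (i : Fin n) (Φ : Ωc u) (φ : L4 n S), PR i Φ (Fset u φ) = canonVal u i Φ φ)
    (h1 : ∀ i ω, IsProbabilityMeasure (PR i ω))
    (h2 : ∀ (i : Fin n) (σ' : S i), MeasurableSet[Fc] {ω | scanon u ω i = σ'})
    (h3 : ∀ i ω, PR i ω {ω' | scanon u ω' i = scanon u ω i} = 1)
    (h4 : ∀ (i : Fin n) (π : @Measure (Ωc u) Fc), MeasurableSet[Fc] {ω | PR i ω = π})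
    (h5 : ∀ i ω, PR i ω {ω' | PR i ω' = PR i ω} = 1) :
    ∀ (ψ : L4 n S) (Φ : Ωc u),
      Sat4 u ψ (PStruct.mk (Ωc u) Fc (scanon u) PR h1 h2 h3 h4 h5) Φ ↔ ψ ∈ Φ.1 := by
  intro ψ
  induction ψ with
  | tt =>
    intro Φ
    obtain ⟨M, ω, h⟩ := Φ.2
    simp only [Sat4, true_iff]
    exact (h .tt).1 trivial
  | RAT i =>
    intro Φ
    obtain ⟨M, ω, h⟩ := Φ.2
    have hs : scanon u Φ = M.s ω := scanon_eq u Φ M ω h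
    have hm : margBelief (PStruct.mk (Ωc u) Fc (scanon u) PR h1 h2 h3 h4 h5) i Φ
        = margBelief M i ω := by
      funext τ
      have hsetc : {Φ' : Ωc u | ∀ j : {j : Fin n // j ≠ i}, scanon u Φ' j.1 = τ j}
          = Fset u (othPlay i τ) := by
        ext Φ'
        obtain ⟨M', ω', h'⟩ := Φ'.2
        have hs' : scanon u Φ' = M'.s ω' := scanon_eq u Φ' M' ω' h'
        simp only [Set.mem_setOf_eq, Fset, hs']
        rw [← h', sat_othPlay]
      unfold margBelief
      rw [show (PStruct.mk (Ωc u) Fc (scanon u) PR h1 h2 h3 h4 h5).PR = PR from rfl,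
        show (PStruct.mk (Ωc u) Fc (scanon u) PR h1 h2 h3 h4 h5).s = scanon u from rfl,
        hsetc, hPR, canonVal_eq u i Φ M ω h]
      have hsm : {ω' | Sat4 u (othPlay i τ) M ω'}
          = {ω' | ∀ j : {j : Fin n // j ≠ i}, M.s ω' j.1 = τ j} := by
        ext ω'; exact sat_othPlay u i τ M ω'
      rw [hsm]
    rw [← h (.RAT i)]
    simp only [Sat4]
    unfold SatRAT
    rw [hm, show (PStruct.mk (Ωc u) Fc (scanon u) PR h1 h2 h3 h4 h5).s = scanon u from rfl, hs]
  | play i σ =>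
    intro Φ
    obtain ⟨M, ω, h⟩ := Φ.2
    have hs : scanon u Φ = M.s ω := scanon_eq u Φ M ω h
    rw [← h (.play i σ)]
    show scanon u Φ i = σ ↔ Sat4 u (.play i σ) M ω
    rw [hs]
    exact Iff.rfl
  | neg φ ih =>
    intro Φ
    obtain ⟨M, ω, h⟩ := Φ.2
    simp only [Sat4]
    rw [ih Φ, ← h φ, ← h (.neg φ)]
    exact Iff.rfl
  | and φ ψ' ih1 ih2 =>
    intro Φ
    obtain ⟨M, ω, h⟩ := Φ.2
    simp only [Sat4]
    rw [ih1 Φ, ih2 Φ, ← h φ, ← h ψ', ← h (.and φ ψ')]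
    exact Iff.rfl
  | B i φ ih =>
    intro Φ
    obtain ⟨M, ω, h⟩ := Φ.2
    haveI := M.PR_prob i ω
    haveI := h1 i Φ
    have hSet : {Φ' : Ωc u | Sat4 u φ (PStruct.mk (Ωc u) Fc (scanon u) PR h1 h2 h3 h4 h5) Φ'}
        = Fset u φ := Set.ext fun Φ' => ih Φ'
    simp only [Sat4]
    constructor
    · rintro ⟨A, hmeas, hsub, hA1⟩
      obtain ⟨χ, rfl⟩ := (hFc A).1 hmeas
      rw [hSet] at hsub
      have hA1' : PR i Φ (Fset u χ) = 1 := hA1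
      have hcompl0 : PR i Φ (Fset u χ)ᶜ = 0 := by
        rw [measure_compl hmeas (measure_ne_top _ _), hA1', measure_univ, tsub_self]
      have hnegχ : M.PR i ω {ω' | Sat4 u χ M ω'}ᶜ = 0 := by
        have h2' := hPR i Φ (.neg χ)
        rw [Fset_neg, hcompl0, canonVal_eq u i Φ M ω h (.neg χ)] at h2'
        have : {ω' | Sat4 u (.neg χ) M ω'} = {ω' | Sat4 u χ M ω'}ᶜ := rfl
        rw [this] at h2'
        exact h2'.symm
      letI : MeasurableSpace M.Ω := M.F
      refine (h (.B i φ)).1 ?_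
      show ∃ A', MeasurableSet[M.F] A' ∧ A' ⊆ {ω' | Sat4 u φ M ω'} ∧ M.PR i ω A' = 1
      refine ⟨(toMeasurable (M.PR i ω) {ω' | Sat4 u χ M ω'}ᶜ)ᶜ,
        (measurableSet_toMeasurable _ _).compl, ?_, ?_⟩
      · intro x hx
        have hxχ : Sat4 u χ M x := by
          by_contra hc
          exact hx (subset_toMeasurable _ _ hc)
        exact Fset_subset_sat u hsub M x hxχ
      · rw [measure_compl (measurableSet_toMeasurable _ _) (measure_ne_top _ _),
          measure_toMeasurable, hnegχ, measure_univ, tsub_zero]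
    · intro hmem
      obtain ⟨A', hmA', hsub', hA'1⟩ := (h (.B i φ)).2 hmem
      refine ⟨Fset u φ, (hFc _).2 ⟨φ, rfl⟩, le_of_eq hSet.symm, ?_⟩
      show PR i Φ (Fset u φ) = 1
      rw [hPR, canonVal_eq u i Φ M ω h]
      refine le_antisymm prob_le_one ?_
      calc (1 : ENNReal) = M.PR i ω A' := hA'1.symm
        _ ≤ _ := measure_mono hsub'
  | Bpos i φ ih =>
    intro Φ
    obtain ⟨M, ω, h⟩ := Φ.2
    haveI := M.PR_prob i ω
    haveI := h1 i Φ
    have hSet : {Φ' : Ωc u | Sat4 u φ (PStruct.mk (Ωc u) Fc (scanon u) PR h1 h2 h3 h4 h5) Φ'}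
        = Fset u φ := Set.ext fun Φ' => ih Φ'
    simp only [Sat4]
    constructor
    · rintro ⟨A, hmeas, hsub, hApos⟩
      obtain ⟨χ, rfl⟩ := (hFc A).1 hmeas
      rw [hSet] at hsub
      have hApos' : 0 < PR i Φ (Fset u χ) := hApos
      have hcompl1 : PR i Φ (Fset u χ)ᶜ < 1 := by
        rw [measure_compl hmeas (measure_ne_top _ _), measure_univ]
        exact ENNReal.sub_lt_self ENNReal.one_ne_top one_ne_zero hApos'.ne'
      have hnegχ : M.PR i ω {ω' | Sat4 u χ M ω'}ᶜ < 1 := by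
        have h2' := hPR i Φ (.neg χ)
        rw [Fset_neg, canonVal_eq u i Φ M ω h (.neg χ)] at h2'
        have : {ω' | Sat4 u (.neg χ) M ω'} = {ω' | Sat4 u χ M ω'}ᶜ := rfl
        rw [this] at h2'
        rw [← h2']
        exact hcompl1
      letI : MeasurableSpace M.Ω := M.F
      refine (h (.Bpos i φ)).1 ?_
      show ∃ A', MeasurableSet[M.F] A' ∧ A' ⊆ {ω' | Sat4 u φ M ω'} ∧ 0 < M.PR i ω A'
      refine ⟨(toMeasurable (M.PR i ω) {ω' | Sat4 u χ M ω'}ᶜ)ᶜ,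
        (measurableSet_toMeasurable _ _).compl, ?_, ?_⟩
      · intro x hx
        have hxχ : Sat4 u χ M x := by
          by_contra hc
          exact hx (subset_toMeasurable _ _ hc)
        exact Fset_subset_sat u hsub M x hxχ
      · rw [measure_compl (measurableSet_toMeasurable _ _) (measure_ne_top _ _),
          measure_toMeasurable, measure_univ]
        rw [tsub_pos_iff_lt]
        exact hnegχ
    · intro hmem
      obtain ⟨A', hmA', hsub', hA'pos⟩ := (h (.Bpos i φ)).2 hmem
      refine ⟨Fset u φ, (hFc _).2 ⟨φ, rfl⟩, le_of_eq hSet.symm, ?_⟩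
      show 0 < PR i Φ (Fset u φ)
      rw [hPR, canonVal_eq u i Φ M ω h]
      exact lt_of_lt_of_le hA'pos (measure_mono hsub')
  | diam φ ih =>
    intro Φ
    obtain ⟨M, ω, h⟩ := Φ.2
    simp only [Sat4]
    rw [← h (.diam φ)]
    exact Iff.rfl
  | conj f ih =>
    intro Φ
    obtain ⟨M, ω, h⟩ := Φ.2
    simp only [Sat4]
    rw [← h (.conj f)]
    show _ ↔ ∀ m, Sat4 u (f m) M ω
    exact forall_congr' fun m => (ih m Φ).trans (h (f m)).symm
  | prGt i α φ ih =>
    intro Φ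
    obtain ⟨M, ω, h⟩ := Φ.2
    have hSet : {Φ' : Ωc u | Sat4 u φ (PStruct.mk (Ωc u) Fc (scanon u) PR h1 h2 h3 h4 h5) Φ'}
        = Fset u φ := Set.ext fun Φ' => ih Φ'
    simp only [Sat4]
    rw [hSet, hPR, canonVal_eq u i Φ M ω h, ← h (.prGt i α φ)]
    exact Iff.rfl

end IA
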